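/- Let A = (a_{ij}) ∈ (𝕊max^∨)^{n×n} be TPD with diagonal entries γ₁ ⪰ γ₂ ⪰ ⋯ ⪰ γₙ (γ_i = a_{ii}), fix k ∈ [n], and set B_k = γ_k ⊙ I ⊖ A. Then every diagonal entry of (B_k)^adj is nonzero; ((B_k)^adj)_{ii} ∈ 𝕊max° for every i ≠ k; and ((B_k)^adj)_{kk} ∈ 𝕊max° if and only if γ_k is not simple, i.e. γ_j = γ_k for some j ≠ k. -/

import Mathlib

/-!
Common framework: the symmetrized tropical semiring 𝕊max over a linearly
ordered abelian group Γ, represented concretely: an element is either 𝟘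
(represented by `none`) or a pair of a modulus `c : Γ` and a sign
(positive, negative or balanced), matching the classes of the quotient
𝕋max²/ℛ described in the paper.
-/

namespace TropPaper

inductive SSign : Type
  | pos
  | neg
  | bal
  deriving DecidableEq

/-- The symmetrized tropical semiring 𝕊max(Γ): `none` is 𝟘, and
`some (c, s)` is the class of modulus `c` and sign `s`. -/
def Smax (Γ : Type) : Type := Option (Γ × SSign)

/-- Γ is divisible. -/
def DivisibleGrp (Γ : Type) [AddCommGroup Γ] : Prop :=
  ∀ k : ℕ, 0 < k → ∀ a : Γ, ∃ b : Γ, k • b = a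

section Defs

variable {Γ : Type} [AddCommGroup Γ] [LinearOrder Γ] [IsOrderedAddMonoid Γ]

/-- 𝟘 -/
def szero : Smax Γ := none

/-- 𝟙 -/
def sone : Smax Γ := some ((0 : Γ), SSign.pos)

/-- modulus |·| : 𝕊max → 𝕋max = WithBot Γ -/
def smod : Smax Γ → WithBot Γ
  | none => ⊥
  | some (c, _) => (c : WithBot Γ)

def sgnMul : SSign → SSign → SSign
  | SSign.pos, t => t
  | SSign.neg, SSign.pos => SSign.neg
  | SSign.neg, SSign.neg => SSign.pos
  | SSign.neg, SSign.bal => SSign.bal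
  | SSign.bal, _ => SSign.bal

/-- ⊕ on 𝕊max -/
def sadd : Smax Γ → Smax Γ → Smax Γ
  | none, b => b
  | some a, none => some a
  | some (c, s), some (d, t) =>
      if c < d then some (d, t)
      else if d < c then some (c, s)
      else some (c, if s = t then s else SSign.bal)

/-- ⊖ (unary) on 𝕊max -/
def sneg : Smax Γ → Smax Γ
  | none => none
  | some (c, SSign.pos) => some (c, SSign.neg)
  | some (c, SSign.neg) => some (c, SSign.pos)
  | some (c, SSign.bal) => some (c, SSign.bal)

/-- ⊙ on 𝕊max -/
def smul : Smax Γ → Smax Γ → Smax Γ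
  | none, _ => none
  | some _, none => none
  | some (c, s), some (d, t) => some (c + d, sgnMul s t)

/-- a ⊖ b -/
def ssub (a b : Smax Γ) : Smax Γ := sadd a (sneg b)

/-- a° = a ⊖ a -/
def sbal (a : Smax Γ) : Smax Γ := ssub a a

/-- the positive element with the same modulus (|·| seen inside 𝕊max⊕) -/
def sabs : Smax Γ → Smax Γ
  | none => none
  | some (c, _) => some (c, SSign.pos)

/-- multiplicative inverse (of invertible, i.e. signed nonzero, elements) -/
def sinv : Smax Γ → Smax Γ
  | none => none
  | some (c, s) => some (-c, s)

/-- a^{⊙k} -/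
def spow (a : Smax Γ) : ℕ → Smax Γ
  | 0 => sone
  | k + 1 => smul a (spow a k)

/-- membership in 𝕊max° (balanced elements together with 𝟘) -/
def IsBal : Smax Γ → Prop
  | none => True
  | some (_, s) => s = SSign.bal

/-- membership in 𝕊max⊕ (positive elements together with 𝟘) -/
def IsPos : Smax Γ → Prop
  | none => True
  | some (_, s) => s = SSign.pos

/-- membership in 𝕊max^∨ (signed elements) -/
def IsSigned : Smax Γ → Prop
  | none => True
  | some (_, s) => s ≠ SSign.bal

/-- the balance relation a ∇ b -/
def Balance (a b : Smax Γ) : Prop := IsBal (ssub a b)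

/-- a ⪯ b -/
def natLe (a b : Smax Γ) : Prop := sadd a b = b

/-- a ≤ b :⟺ b ⊖ a ∈ 𝕊max⊕ ∪ 𝕊max° -/
def sle (a b : Smax Γ) : Prop := IsPos (ssub b a) ∨ IsBal (ssub b a)

/-- a < b :⟺ b ⊖ a ∈ 𝕊max⊕ ∖ {𝟘} -/
def slt (a b : Smax Γ) : Prop := IsPos (ssub b a) ∧ ssub b a ≠ szero

/-- finite ⊕-sum over a list -/
def sumS {α : Type} (l : List α) (f : α → Smax Γ) : Smax Γ :=
  (l.map f).foldr sadd szero

/-- finite ⊙-product over a list -/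
def prodS {α : Type} (l : List α) (f : α → Smax Γ) : Smax Γ :=
  (l.map f).foldr smul sone

/-- the zero vector -/
def zeroVecS {n : ℕ} : Fin n → Smax Γ := fun _ => szero

def VecSigned {n : ℕ} (x : Fin n → Smax Γ) : Prop := ∀ i, IsSigned (x i)

def MatSigned {n : ℕ} (A : Matrix (Fin n) (Fin n) (Smax Γ)) : Prop :=
  ∀ i j, IsSigned (A i j)

def SymmS {n : ℕ} (A : Matrix (Fin n) (Fin n) (Smax Γ)) : Prop :=
  ∀ i j, A i j = A j i

/-- A ⊙ v -/
def matVecS {n : ℕ} (A : Matrix (Fin n) (Fin n) (Smax Γ)) (v : Fin n → Smax Γ) :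
    Fin n → Smax Γ :=
  fun i => sumS (List.finRange n) fun j => smul (A i j) (v j)

/-- A ⊙ B -/
def matMulS {n : ℕ} (A B : Matrix (Fin n) (Fin n) (Smax Γ)) :
    Matrix (Fin n) (Fin n) (Smax Γ) :=
  Matrix.of fun i j => sumS (List.finRange n) fun l => smul (A i l) (B l j)

/-- the identity matrix I -/
def idMatS {n : ℕ} : Matrix (Fin n) (Fin n) (Smax Γ) :=
  Matrix.of fun i j => if i = j then sone else szero

/-- xᵀ ⊙ A ⊙ x -/
def quadFormS {n : ℕ} (A : Matrix (Fin n) (Fin n) (Smax Γ)) (x : Fin n → Smax Γ) :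
    Smax Γ :=
  sumS (List.finRange n) fun i => sumS (List.finRange n) fun j =>
    smul (x i) (smul (A i j) (x j))

/-- tropical positive definiteness (the quadratic-form condition) -/
def TPD {n : ℕ} (A : Matrix (Fin n) (Fin n) (Smax Γ)) : Prop :=
  ∀ x : Fin n → Smax Γ, VecSigned x → x ≠ zeroVecS → slt szero (quadFormS A x)

/-- tropical positive semidefiniteness -/
def TPSD {n : ℕ} (A : Matrix (Fin n) (Fin n) (Smax Γ)) : Prop :=
  ∀ x : Fin n → Smax Γ, VecSigned x → x ≠ zeroVecS → sle szero (quadFormS A x)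

/-- sgn(π) ∈ {𝟙, ⊖𝟙} -/
def permSignS {n : ℕ} (π : Equiv.Perm (Fin n)) : Smax Γ :=
  if (Equiv.Perm.sign π : ℤ) = 1 then sone else sneg sone

/-- the determinant over 𝕊max -/
noncomputable def detS {n : ℕ} (M : Matrix (Fin n) (Fin n) (Smax Γ)) : Smax Γ :=
  sumS (Finset.univ : Finset (Equiv.Perm (Fin n))).toList fun π =>
    smul (permSignS π) (prodS (List.finRange n) fun i => M i (π i))

/-- the adjugate matrix over 𝕊max -/
noncomputable def adjS {n : ℕ} (M : Matrix (Fin (n+1)) (Fin (n+1)) (Smax Γ)) :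
    Matrix (Fin (n+1)) (Fin (n+1)) (Smax Γ) :=
  Matrix.of fun i j =>
    smul (spow (sneg sone) (i.val + j.val))
      (detS (Matrix.of fun a b : Fin n => M (Fin.succAbove j a) (Fin.succAbove i b)))

/-- γ ⊙ I ⊖ A -/
def charMatS {n : ℕ} (γ : Smax Γ) (A : Matrix (Fin n) (Fin n) (Smax Γ)) :
    Matrix (Fin n) (Fin n) (Smax Γ) :=
  Matrix.of fun i j => ssub (smul γ (idMatS i j)) (A i j)

/-- tr_k(A) = ⊕_{|K| = k} det(A[K,K]) -/
noncomputable def trkS {n : ℕ} (k : ℕ) (A : Matrix (Fin n) (Fin n) (Smax Γ)) : Smax Γ :=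
  sumS ((Finset.univ : Finset (Fin n)).powersetCard k).attach.toList fun K =>
    detS (Matrix.of fun a b : Fin k =>
      A (K.1.orderEmbOfFin (Finset.mem_powersetCard.mp K.2).2 a)
        (K.1.orderEmbOfFin (Finset.mem_powersetCard.mp K.2).2 b))

/-- matrix power A^{⊙k} -/
def matPowS {n : ℕ} (A : Matrix (Fin n) (Fin n) (Smax Γ)) :
    ℕ → Matrix (Fin n) (Fin n) (Smax Γ)
  | 0 => idMatS
  | k + 1 => matMulS A (matPowS A k)

/-- partial Kleene sums I ⊕ A ⊕ ⋯ ⊕ A^{⊙m} -/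
def starPartialS {n : ℕ} (A : Matrix (Fin n) (Fin n) (Smax Γ)) (m : ℕ) :
    Matrix (Fin n) (Fin n) (Smax Γ) :=
  Matrix.of fun i j => sumS (List.range (m+1)) fun k => matPowS A k i j

/-- the diagonal matrix D^(k) with diagonal (γ₁,…,γ_{k−1},𝟘,…,𝟘) (0-based k) -/
def DmatS {n : ℕ} (A : Matrix (Fin n) (Fin n) (Smax Γ)) (k : Fin n) :
    Matrix (Fin n) (Fin n) (Smax Γ) :=
  Matrix.of fun i j => if i = j ∧ i < k then A i i else szero

/-- the complementary matrix A^(k) -/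
def AmatS {n : ℕ} (A : Matrix (Fin n) (Fin n) (Smax Γ)) (k : Fin n) :
    Matrix (Fin n) (Fin n) (Smax Γ) :=
  Matrix.of fun i j => if i ≠ j ∨ k ≤ i then A i j else szero

/-- M = (γ⊙I ⊖ D^(k))^{⊙−1} ⊙ A^(k) -/
def MmatS {n : ℕ} (A : Matrix (Fin n) (Fin n) (Smax Γ)) (k : Fin n) :
    Matrix (Fin n) (Fin n) (Smax Γ) :=
  Matrix.of fun i j =>
    smul (sinv (if i < k then sneg (A i i) else A k k)) (AmatS A k i j)

/-- λ_k = (⊖𝟙)^{⊙(k−1)} ⊙ γ₁ ⊙ ⋯ ⊙ γ_{k−1} ⊙ γ^{⊙(n−k)} (0-based k, size n) -/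
def lamkS {n : ℕ} (A : Matrix (Fin n) (Fin n) (Smax Γ)) (k : Fin n) : Smax Γ :=
  smul (spow (sneg sone) k.val)
    (smul (prodS ((List.finRange n).filter (fun i => i < k)) fun i => A i i)
      (spow (A k k) (n - 1 - k.val)))

/-- irreducibility: the digraph of nonzero entries is strongly connected -/
def IrreducibleS {n : ℕ} (A : Matrix (Fin n) (Fin n) (Smax Γ)) : Prop :=
  ∀ i j : Fin n, Relation.ReflTransGen (fun a b => A a b ≠ szero) i j

/-- diagonal entries sorted non-increasingly for ⪯ -/
def DiagSortedS {n : ℕ} (A : Matrix (Fin n) (Fin n) (Smax Γ)) : Prop :=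
  ∀ i j : Fin n, i ≤ j → natLe (A j j) (A i i)

/-! 𝕋max-side notions (for the characteristic polynomial of |A|). -/

/-- finite max over a list in 𝕋max -/
def sumT {α : Type} (l : List α) (f : α → WithBot Γ) : WithBot Γ :=
  (l.map f).foldr max ⊥

/-- finite ⊙-product over a list in 𝕋max -/
def prodT {α : Type} (l : List α) (f : α → WithBot Γ) : WithBot Γ :=
  (l.map f).foldr (· + ·) (0 : WithBot Γ)

/-- the permanent over 𝕋max -/
noncomputable def perT {n : ℕ} (M : Matrix (Fin n) (Fin n) (WithBot Γ)) : WithBot Γ :=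
  sumT (Finset.univ : Finset (Equiv.Perm (Fin n))).toList fun π =>
    prodT (List.finRange n) fun i => M i (π i)

/-- coefficient of X^k in the 𝕋max-characteristic polynomial of B -/
noncomputable def charCoeffT {n : ℕ} (B : Matrix (Fin n) (Fin n) (WithBot Γ)) (k : ℕ) : WithBot Γ :=
  if k ≤ n then
    sumT ((Finset.univ : Finset (Fin n)).powersetCard (n - k)).attach.toList fun K =>
      perT (Matrix.of fun a b : Fin (n - k) =>
        B (K.1.orderEmbOfFin (Finset.mem_powersetCard.mp K.2).2 a)
          (K.1.orderEmbOfFin (Finset.mem_powersetCard.mp K.2).2 b))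
  else ⊥

/-- multiplicity of x as a 𝕋max-root of the formal polynomial of degree ≤ n
with coefficients Q: for x = ⊥ it is the lower degree, for x = c ∈ Γ it is the
difference between the largest and smallest exponents attaining
max_k (Q_k + k·c). -/
noncomputable def rootMultT (n : ℕ) (Q : ℕ → WithBot Γ) (x : WithBot Γ) : ℕ :=
  WithBot.recBotCoe
    (sInf {k | Q k ≠ ⊥})
    (fun c =>
      sSup {k | k ≤ n ∧ Q k + ((k • c : Γ) : WithBot Γ)
              = sumT (List.range (n+1)) (fun l => Q l + ((l • c : Γ) : WithBot Γ))}
        - sInf {k | k ≤ n ∧ Q k + ((k • c : Γ) : WithBot Γ)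
              = sumT (List.range (n+1)) (fun l => Q l + ((l • c : Γ) : WithBot Γ))})
    x

end Defs

/-- the signed valuation associated with a valuation v on an ordered field L -/
def svMap {Γ : Type} [AddCommGroup Γ] [LinearOrder Γ] [IsOrderedAddMonoid Γ] {L : Type} [Field L] [LinearOrder L] [IsStrictOrderedRing L]
    (v : L → WithBot Γ) (b : L) : Smax Γ :=
  if b = 0 then szero
  else if 0 < b then WithBot.recBotCoe szero (fun c => some (c, SSign.pos)) (v b)
  else WithBot.recBotCoe szero (fun c => some (c, SSign.neg)) (v b)

end TropPaper

namespace TropPaper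

section Basic
variable {Γ : Type} [AddCommGroup Γ] [LinearOrder Γ] [IsOrderedAddMonoid Γ]

lemma szero_sadd (a : Smax Γ) : sadd szero a = a := rfl

lemma sadd_szero (a : Smax Γ) : sadd a szero = a := by
  rcases a with _ | ⟨c, s⟩ <;> rfl

lemma sadd_lt {c d : Γ} (s t : SSign) (h : c < d) :
    sadd (some (c, s)) (some (d, t)) = some (d, t) := by
  simp [sadd, h]
  rfl

lemma sadd_gt {c d : Γ} (s t : SSign) (h : d < c) :
    sadd (some (c, s)) (some (d, t)) = some (c, s) := by
  simp [sadd, h, lt_asymm h]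
  rfl

lemma sadd_diag {c : Γ} (s t : SSign) :
    sadd (some (c, s)) (some (c, t)) = some (c, if s = t then s else SSign.bal) := by
  simp [sadd]
  rfl

lemma sadd_none (a : Smax Γ) : sadd a none = a := by
  rcases a with _ | ⟨c, s⟩ <;> rfl

lemma sadd_comm (a b : Smax Γ) : sadd a b = sadd b a := by
  rcases a with _ | ⟨c, s⟩ <;> rcases b with _ | ⟨d, t⟩
  · rfl
  · rfl
  · erw [sadd_none]
  · rcases lt_trichotomy c d with h | h | h
    · rw [sadd_lt _ _ h, sadd_gt _ _ h]
    · subst h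
      rw [sadd_diag, sadd_diag]
      by_cases hst : s = t
      · simp [hst]; rfl
      · simp [hst, Ne.symm hst]; rfl
    · rw [sadd_gt _ _ h, sadd_lt _ _ h]

lemma sgn_merge_assoc (s t u : SSign) :
    (if (if s = t then s else SSign.bal) = u then (if s = t then s else SSign.bal)
      else SSign.bal)
    = (if s = (if t = u then t else SSign.bal) then s else SSign.bal) := by
  rcases s <;> rcases t <;> rcases u <;> rfl

lemma sadd_assoc (a b c : Smax Γ) : sadd (sadd a b) c = sadd a (sadd b c) := by
  rcases a with _ | ⟨x, s⟩
  · rfl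
  rcases b with _ | ⟨y, t⟩
  · erw [sadd_none]; rfl
  rcases c with _ | ⟨z, u⟩
  · erw [sadd_none, sadd_none]
  rcases lt_trichotomy x y with h1 | h1 | h1 <;> rcases lt_trichotomy y z with h2 | h2 | h2
  · simp only [sadd_lt _ _ h1, sadd_lt _ _ h2, sadd_lt _ _ (h1.trans h2)]; rfl
  · subst h2
    simp only [sadd_lt _ _ h1, sadd_diag]; rfl
  · simp only [sadd_lt _ _ h1, sadd_gt _ _ h2]; rfl
  · subst h1
    simp only [sadd_diag, sadd_lt _ _ h2]; rfl
  · subst h1; subst h2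
    simp only [sadd_diag, sgn_merge_assoc]; rfl
  · subst h1
    simp only [sadd_diag, sadd_gt _ _ h2]; rfl
  · rcases lt_trichotomy x z with h3 | h3 | h3
    · simp only [sadd_gt _ _ h1, sadd_lt _ _ h2, sadd_lt _ _ h3]; rfl
    · subst h3
      simp only [sadd_gt _ _ h1, sadd_lt _ _ h2, sadd_diag]; rfl
    · simp only [sadd_gt _ _ h1, sadd_lt _ _ h2, sadd_gt _ _ h3]; rfl
  · subst h2
    simp only [sadd_gt _ _ h1, sadd_diag]; rfl
  · simp only [sadd_gt _ _ h1, sadd_gt _ _ h2, sadd_gt _ _ (h2.trans h1)]; rfl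

instance : AddCommMonoid (Smax Γ) where
  add := sadd
  zero := szero
  add_assoc := sadd_assoc
  zero_add := szero_sadd
  add_zero := sadd_szero
  add_comm := sadd_comm
  nsmul := fun n a => Nat.rec szero (fun _ ih => sadd ih a) n
  nsmul_zero := fun _ => rfl
  nsmul_succ := fun _ _ => rfl

lemma add_def (a b : Smax Γ) : a + b = sadd a b := rfl
lemma zero_def : (0 : Smax Γ) = szero := rfl

lemma smod_szero : smod (szero : Smax Γ) = ⊥ := rfl

lemma smod_eq_bot {a : Smax Γ} : smod a = ⊥ ↔ a = szero := by
  rcases a with _ | ⟨c, s⟩ <;> simp [smod, szero] <;> rfl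

lemma smod_sadd (a b : Smax Γ) : smod (sadd a b) = max (smod a) (smod b) := by
  rcases a with _ | ⟨c, s⟩ <;> rcases b with _ | ⟨d, t⟩
  · rfl
  · show smod (some (d, t)) = max ⊥ (smod (some (d, t)))
    rw [max_eq_right bot_le]
  · erw [sadd_none]
    show smod (some (c, s)) = max (smod (some (c, s))) ⊥
    rw [max_eq_left bot_le]
  · rcases lt_trichotomy c d with h | h | h
    · rw [sadd_lt _ _ h]
      show _ = max (c : WithBot Γ) (d : WithBot Γ)
      rw [max_eq_right (by exact_mod_cast h.le)]
      rfl
    · subst h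
      rw [sadd_diag]
      show (c : WithBot Γ) = max (c : WithBot Γ) (c : WithBot Γ)
      rw [max_self]
    · rw [sadd_gt _ _ h]
      show _ = max (c : WithBot Γ) (d : WithBot Γ)
      rw [max_eq_left (by exact_mod_cast h.le)]
      rfl

lemma sadd_eq_left {a b : Smax Γ} (h : smod b < smod a) : sadd a b = a := by
  rcases a with _ | ⟨c, s⟩
  · simp [smod] at h
  rcases b with _ | ⟨d, t⟩
  · exact sadd_none _
  · simp only [smod, WithBot.coe_lt_coe] at h
    exact sadd_gt _ _ h

lemma smul_szero (a : Smax Γ) : smul a szero = szero := by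
  rcases a with _ | ⟨c, s⟩ <;> rfl

lemma szero_smul (a : Smax Γ) : smul szero a = szero := rfl

lemma sgnMul_pos (s : SSign) : sgnMul s SSign.pos = s := by rcases s <;> rfl

lemma smul_sone (a : Smax Γ) : smul a sone = a := by
  rcases a with _ | ⟨c, s⟩
  · rfl
  · simp [smul, sone, sgnMul_pos]; rfl

lemma sone_smul (a : Smax Γ) : smul sone a = a := by
  rcases a with _ | ⟨c, s⟩
  · rfl
  · simp [smul, sone, sgnMul]; rfl

lemma smod_smul (a b : Smax Γ) : smod (smul a b) = smod a + smod b := by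
  rcases a with _ | ⟨c, s⟩ <;> rcases b with _ | ⟨d, t⟩ <;>
    simp [smul, smod, WithBot.coe_add]

lemma smul_ne_szero {a b : Smax Γ} (ha : a ≠ szero) (hb : b ≠ szero) :
    smul a b ≠ szero := by
  rcases a with _ | ⟨c, s⟩
  · exact absurd rfl ha
  rcases b with _ | ⟨d, t⟩
  · exact absurd rfl hb
  · simp [smul, szero]; exact Option.some_ne_none _

lemma sgnMul_eq_bal {s t : SSign} :
    sgnMul s t = SSign.bal ↔ s = SSign.bal ∨ t = SSign.bal := by
  rcases s <;> rcases t <;> simp [sgnMul]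

lemma isBal_smul {a b : Smax Γ} (ha : a ≠ szero) (hb : b ≠ szero) :
    IsBal (smul a b) ↔ IsBal a ∨ IsBal b := by
  rcases a with _ | ⟨c, s⟩
  · exact absurd rfl ha
  rcases b with _ | ⟨d, t⟩
  · exact absurd rfl hb
  · simp [smul, IsBal, sgnMul_eq_bal]

lemma sneg_szero : sneg (szero : Smax Γ) = szero := rfl

lemma smod_sneg (a : Smax Γ) : smod (sneg a) = smod a := by
  rcases a with _ | ⟨c, s⟩
  · rfl
  · rcases s <;> rfl

lemma sneg_eq_szero {a : Smax Γ} : sneg a = szero ↔ a = szero := by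
  rcases a with _ | ⟨c, s⟩
  · exact ⟨fun _ => rfl, fun _ => rfl⟩
  · rcases s <;> simp [sneg, szero]

lemma ssub_szero (a : Smax Γ) : ssub a szero = a := by
  rw [ssub, sneg_szero, sadd_szero]

/-! sums and products -/

lemma sumS_eq_listSum {α : Type} (l : List α) (f : α → Smax Γ) :
    sumS l f = (l.map f).sum := by
  induction l with
  | nil => rfl
  | cons x t ih =>
      show sadd (f x) (sumS t f) = _
      rw [List.map_cons, List.sum_cons, ih]
      rfl

lemma sumS_finRange {m : ℕ} (f : Fin m → Smax Γ) :
    sumS (List.finRange m) f = ∑ i, f i := by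
  rw [sumS_eq_listSum, Fin.sum_univ_def]

lemma sumS_toList {α : Type} (s : Finset α) (f : α → Smax Γ) :
    sumS s.toList f = ∑ x ∈ s, f x := by
  rw [sumS_eq_listSum, Finset.sum, ← Multiset.coe_toList s.val, Multiset.map_coe,
    Multiset.sum_coe]
  rfl

lemma prodS_nil {α : Type} (f : α → Smax Γ) : prodS ([] : List α) f = sone := rfl

lemma prodS_cons {α : Type} (x : α) (l : List α) (f : α → Smax Γ) :
    prodS (x :: l) f = smul (f x) (prodS l f) := rfl

lemma sone_ne_szero : (sone : Smax Γ) ≠ szero := by simp [sone, szero]; exact Option.some_ne_none _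

lemma prodS_ne_szero {α : Type} {l : List α} {f : α → Smax Γ}
    (h : ∀ x ∈ l, f x ≠ szero) : prodS l f ≠ szero := by
  induction l with
  | nil => exact sone_ne_szero
  | cons x t ih =>
      rw [prodS_cons]
      exact smul_ne_szero (h x (by simp)) (ih fun y hy => h y (by simp [hy]))

lemma smod_prodS {α : Type} (l : List α) (f : α → Smax Γ) :
    smod (prodS l f) = (l.map fun x => smod (f x)).sum := by
  induction l with
  | nil => simp [prodS_nil, sone, smod]
  | cons x t ih => rw [prodS_cons, smod_smul, ih, List.map_cons, List.sum_cons]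

lemma isBal_prodS {α : Type} {l : List α} {f : α → Smax Γ}
    (h : ∀ x ∈ l, f x ≠ szero) :
    IsBal (prodS l f) ↔ ∃ x ∈ l, IsBal (f x) := by
  induction l with
  | nil => simp [prodS_nil, sone, IsBal]
  | cons x t ih =>
      rw [prodS_cons, isBal_smul (h x (by simp))
        (prodS_ne_szero fun y hy => h y (by simp [hy]))]
      rw [ih fun y hy => h y (by simp [hy])]
      simp

lemma smod_sum_lt {α : Type} {s : Finset α} {f : α → Smax Γ} {m : WithBot Γ}
    (hm : ⊥ < m) (h : ∀ b ∈ s, smod (f b) < m) :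
    smod (∑ b ∈ s, f b) < m := by
  classical
  induction s using Finset.cons_induction with
  | empty => simpa [zero_def, smod_szero] using hm
  | cons a t ha ih =>
      rw [Finset.sum_cons, add_def, smod_sadd]
      exact max_lt (h a (by simp)) (ih fun b hb => h b (by simp [hb]))

lemma sum_dominant {α : Type} {s : Finset α} {f : α → Smax Γ} {a : α}
    (ha : a ∈ s) (hdom : ∀ b ∈ s, b ≠ a → smod (f b) < smod (f a))
    (hne : f a ≠ szero) : ∑ b ∈ s, f b = f a := by
  classical
  rw [← Finset.add_sum_erase s f ha, add_def]
  have hbot : ⊥ < smod (f a) := by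
    rw [bot_lt_iff_ne_bot]
    exact fun hc => hne (smod_eq_bot.mp hc)
  exact sadd_eq_left (smod_sum_lt hbot fun b hb =>
    hdom b (Finset.mem_of_mem_erase hb) (Finset.ne_of_mem_erase hb))


/-! consequences of tropical positive definiteness -/

lemma diag_pos {m : ℕ} {A : Matrix (Fin m) (Fin m) (Smax Γ)} (hTPD : TPD A)
    (i : Fin m) : ∃ c, A i i = some (c, SSign.pos) := by
  classical
  set x : Fin m → Smax Γ := fun p => if p = i then sone else szero with hx
  have hxs : VecSigned x := by
    intro p
    by_cases h : p = i <;> simp [hx, h, IsSigned, sone, szero]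
  have hxne : x ≠ zeroVecS := by
    intro hc
    have := congrFun hc i
    simp [hx, zeroVecS, sone, szero] at this
  have hq : quadFormS A x = A i i := by
    unfold quadFormS
    rw [sumS_finRange]
    simp only [sumS_finRange]
    rw [Finset.sum_eq_single_of_mem i (Finset.mem_univ i) ?houter]
    case houter =>
      intro p _ hp
      apply Finset.sum_eq_zero
      intro q _
      simp [hx, hp, szero_smul, zero_def]
    rw [Finset.sum_eq_single_of_mem i (Finset.mem_univ i) ?hinner]
    case hinner =>
      intro q _ hq
      simp [hx, hq, smul_szero, zero_def]
    simp [hx, sone_smul, smul_sone]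
  have h := hTPD x hxs hxne
  obtain ⟨h1, h2⟩ := h
  rw [hq, ssub_szero] at h1 h2
  rcases hAi : A i i with _ | ⟨c, s⟩
  · rw [hAi] at h2; exact absurd rfl h2
  · rw [hAi] at h1
    have hs : s = SSign.pos := h1
    exact ⟨c, by rw [hs]⟩

lemma off_bound (hdiv : DivisibleGrp Γ) {m : ℕ} {A : Matrix (Fin m) (Fin m) (Smax Γ)}
    (hsym : SymmS A) (hsgn : MatSigned A) (hTPD : TPD A) {i j : Fin m}
    (hij : i ≠ j) :
    smod (A i j) + smod (A i j) < smod (A i i) + smod (A j j) := by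
  classical
  obtain ⟨ci, hci⟩ := diag_pos hTPD i
  obtain ⟨cj, hcj⟩ := diag_pos hTPD j
  rcases hAij : A i j with _ | ⟨d, sd⟩
  · rw [hci, hcj]
    show (⊥ : WithBot Γ) + ⊥ < (ci : WithBot Γ) + (cj : WithBot Γ)
    rw [← WithBot.coe_add, WithBot.bot_add]
    exact WithBot.bot_lt_coe _
  have hsd : sd ≠ SSign.bal := by
    have := hsgn i j
    rw [hAij] at this
    exact this
  obtain ⟨e, he⟩ := hdiv 2 (by norm_num) (cj - ci)
  have h2e : e + e = cj - ci := by rw [← he, two_nsmul]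
  have hee : e + (ci + e) = cj := by
    have h3 : e + (ci + e) = e + e + ci := by abel
    rw [h3, h2e, sub_add_cancel]
  set s' := if sd = SSign.pos then SSign.neg else SSign.pos with hs'
  have hs'nb : s' ≠ SSign.bal := by
    rcases sd <;> simp [hs']
  have hg1 : sgnMul s' (sgnMul SSign.pos s') = SSign.pos := by
    rcases sd with _ | _ | _
    · simp [hs', sgnMul]
    · simp [hs', sgnMul]
    · exact absurd rfl hsd
  have hg2 : sgnMul s' (sgnMul sd SSign.pos) = SSign.neg := by
    rcases sd with _ | _ | _
    · simp [hs', sgnMul]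
    · simp [hs', sgnMul]
    · exact absurd rfl hsd
  have hg3 : sgnMul SSign.pos (sgnMul sd s') = SSign.neg := by
    rcases sd with _ | _ | _
    · simp [hs', sgnMul]
    · simp [hs', sgnMul]
    · exact absurd rfl hsd
  set x : Fin m → Smax Γ := fun p =>
    if p = i then some (e, s') else if p = j then some ((0 : Γ), SSign.pos) else szero
    with hx
  have hxi : x i = some (e, s') := by simp [hx]; rfl
  have hxj : x j = some ((0 : Γ), SSign.pos) := by simp [hx, Ne.symm hij]; rfl
  have hxs : VecSigned x := by
    intro p
    by_cases h1 : p = i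
    · subst h1; rw [hxi]; exact hs'nb
    · by_cases h2 : p = j
      · subst h2; rw [hxj]; exact (by decide : SSign.pos ≠ SSign.bal)
      · have hz : x p = szero := by simp [hx, h1, h2]
        rw [hz]; trivial
  have hxne : x ≠ zeroVecS := by
    intro hc
    have := congrFun hc i
    rw [hxi] at this
    simp [zeroVecS, szero] at this
  have hji : A j i = some (d, sd) := by rw [hsym j i, hAij]
  have key : quadFormS A x =
      sadd (sadd (some (cj, SSign.pos)) (some (e + d, SSign.neg)))
           (sadd (some (e + d, SSign.neg)) (some (cj, SSign.pos))) := by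
    unfold quadFormS
    rw [sumS_finRange]
    simp only [sumS_finRange]
    rw [← Finset.sum_subset (Finset.subset_univ ({i, j} : Finset (Fin m))) ?hvan]
    case hvan =>
      intro p _ hp
      simp only [Finset.mem_insert, Finset.mem_singleton, not_or] at hp
      apply Finset.sum_eq_zero
      intro q _
      have : x p = szero := by simp [hx, hp.1, hp.2]
      simp [this, szero_smul, zero_def]
    rw [Finset.sum_pair hij]
    have hinner : ∀ p : Fin m,
        ∑ q, smul (x p) (smul (A p q) (x q))
          = sadd (smul (x p) (smul (A p i) (x i))) (smul (x p) (smul (A p j) (x j))) := by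
      intro p
      rw [← Finset.sum_subset (Finset.subset_univ ({i, j} : Finset (Fin m))) ?hvan2]
      case hvan2 =>
        intro q _ hq
        simp only [Finset.mem_insert, Finset.mem_singleton, not_or] at hq
        have : x q = szero := by simp [hx, hq.1, hq.2]
        simp [this, smul_szero, zero_def]
      rw [Finset.sum_pair hij]
      rfl
    rw [add_def, hinner i, hinner j, hxi, hxj, hci, hcj, hAij, hji]
    simp only [smul, hg1, hg2, hg3]
    rw [hee]
    have e1 : e + (d + 0) = e + d := by rw [add_zero]
    have e2 : (0 : Γ) + (d + e) = e + d := by rw [zero_add, add_comm]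
    have e3 : (0 : Γ) + (cj + 0) = cj := by rw [zero_add, add_zero]
    rw [e1, e2, e3]
    rfl
  by_contra hcon
  rw [hci, hcj] at hcon
  have hcon0 : ¬ ((d : WithBot Γ) + (d : WithBot Γ)
      < (ci : WithBot Γ) + (cj : WithBot Γ)) := hcon
  have hcon' : (ci : WithBot Γ) + (cj : WithBot Γ) ≤ (d : WithBot Γ) + (d : WithBot Γ) :=
    not_lt.mp hcon0
  rw [← WithBot.coe_add, ← WithBot.coe_add, WithBot.coe_le_coe] at hcon'
  have hle : cj ≤ e + d := by
    by_contra hlt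
    push_neg at hlt
    have := add_lt_add hlt hlt
    have h4 : e + d + (e + d) = (d + d) + (cj - ci) := by
      rw [← h2e]; abel
    rw [h4] at this
    have h5 : cj + cj = (ci + cj) + (cj - ci) := by abel
    rw [h5] at this
    exact absurd (lt_of_add_lt_add_right this) (not_lt.mpr hcon')
  obtain ⟨h1, h2⟩ := hTPD x hxs hxne
  rw [key, ssub_szero] at h1
  rcases eq_or_lt_of_le hle with heq | hlt
  · rw [← heq] at h1
    rw [sadd_diag, sadd_diag] at h1
    simp only [if_neg (by decide : SSign.pos ≠ SSign.neg),
      if_neg (by decide : SSign.neg ≠ SSign.pos)] at h1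
    rw [sadd_diag] at h1
    simp at h1
    exact absurd h1 (by simp [IsPos])
  · rw [sadd_lt _ _ hlt, sadd_gt _ _ hlt, sadd_diag] at h1
    simp at h1
    exact absurd h1 (by simp [IsPos])


/-! helper facts for the adjugate computation -/

lemma smod_some {Γ : Type} [AddCommGroup Γ] [LinearOrder Γ] [IsOrderedAddMonoid Γ] (p : Γ × SSign) :
    smod (some p : Smax Γ) = (p.1 : WithBot Γ) := by
  rcases p with ⟨c, s⟩; rfl

lemma some_ne_szero {Γ : Type} [AddCommGroup Γ] [LinearOrder Γ] [IsOrderedAddMonoid Γ] (p : Γ × SSign) :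
    (some p : Smax Γ) ≠ szero :=
  fun h => Option.some_ne_none p h

lemma factor_spec (g c : Γ) : ∃ t : SSign,
    ssub (some (g, SSign.pos) : Smax Γ) (some (c, SSign.pos)) = some (max g c, t) ∧
    (t = SSign.bal ↔ g = c) := by
  show ∃ t, sadd (some (g, SSign.pos)) (some (c, SSign.neg)) = some (max g c, t) ∧ _
  rcases lt_trichotomy g c with h | h | h
  · exact ⟨SSign.neg, by rw [sadd_lt _ _ h, max_eq_right h.le],
      by simp [h.ne]⟩
  · subst h
    refine ⟨SSign.bal, ?_, by simp⟩
    rw [sadd_diag, max_self]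
    simp; rfl
  · exact ⟨SSign.pos, by rw [sadd_gt _ _ h, max_eq_left h.le],
      by simp [h.ne']⟩

lemma smod_permSignS {m : ℕ} (π : Equiv.Perm (Fin m)) :
    smod (permSignS π : Smax Γ) = (0 : WithBot Γ) := by
  unfold permSignS
  split_ifs <;> rfl

lemma permSignS_one {m : ℕ} :
    permSignS (1 : Equiv.Perm (Fin m)) = (sone : Smax Γ) := by
  simp [permSignS]

lemma spow_sneg_sone (m : ℕ) :
    ∃ s, s ≠ SSign.bal ∧ spow (sneg (sone : Smax Γ)) m = some ((0 : Γ), s) := by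
  induction m with
  | zero => exact ⟨SSign.pos, by decide, rfl⟩
  | succ p ih =>
      obtain ⟨s, hs, hsp⟩ := ih
      refine ⟨sgnMul SSign.neg s, ?_, ?_⟩
      · rcases s with _ | _ | _
        · decide
        · decide
        · exact absurd rfl hs
      · show smul (sneg sone) (spow (sneg sone) p) = _
        rw [hsp]
        show smul (some ((0 : Γ), SSign.neg)) _ = _
        simp [smul]; rfl

lemma prodS_congr {α : Type} {l : List α} {f f' : α → Smax Γ}
    (h : ∀ x ∈ l, f x = f' x) : prodS l f = prodS l f' := by
  induction l with
  | nil => rfl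
  | cons x t ih =>
      rw [prodS_cons, prodS_cons, h x (by simp), ih fun y hy => h y (by simp [hy])]

lemma smod_prodS_finRange {m : ℕ} (f : Fin m → Smax Γ) :
    smod (prodS (List.finRange m) f) = ∑ a, smod (f a) := by
  rw [smod_prodS, ← Fin.sum_univ_def]

lemma coe_finsetSum {α : Type} (s : Finset α) (f : α → Γ) :
    ((∑ x ∈ s, f x : Γ) : WithBot Γ) = ∑ x ∈ s, (f x : WithBot Γ) := by
  classical
  induction s using Finset.cons_induction with
  | empty => rfl
  | cons a t ha ih => rw [Finset.sum_cons, Finset.sum_cons, WithBot.coe_add, ih]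

lemma det_charMat_sub (hdiv : DivisibleGrp Γ) {n : ℕ}
    {A : Matrix (Fin (n+1)) (Fin (n+1)) (Smax Γ)}
    (hsym : SymmS A) (hsgn : MatSigned A) (hTPD : TPD A) (k i : Fin (n+1)) :
    detS (Matrix.of fun a b : Fin n =>
        charMatS (A k k) A (i.succAbove a) (i.succAbove b))
      = prodS (List.finRange n)
          (fun j => ssub (A k k) (A (i.succAbove j) (i.succAbove j))) := by
  classical
  obtain ⟨g, hg⟩ := diag_pos hTPD k
  choose c hc using fun a : Fin n => diag_pos hTPD (i.succAbove a)
  set σ : Fin n → Fin (n+1) := i.succAbove with hσ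
  have hσinj : Function.Injective σ := Fin.succAbove_right_injective
  set C : Matrix (Fin n) (Fin n) (Smax Γ) :=
    Matrix.of (fun a b : Fin n => charMatS (A k k) A (σ a) (σ b)) with hCdef
  choose t ht hbal using fun a : Fin n => factor_spec g (c a)
  have hCdiag : ∀ a : Fin n, C a a = some (max g (c a), t a) := by
    intro a
    show ssub (smul (A k k) (idMatS (σ a) (σ a))) (A (σ a) (σ a)) = _
    have h1 : idMatS (σ a) (σ a) = (sone : Smax Γ) := by simp [idMatS]
    rw [h1, smul_sone, hg, hc a]
    exact ht a
  have hCoff : ∀ a b : Fin n, a ≠ b → C a b = sneg (A (σ a) (σ b)) := by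
    intro a b hab
    show ssub (smul (A k k) (idMatS (σ a) (σ b))) (A (σ a) (σ b)) = _
    have h1 : idMatS (σ a) (σ b) = (szero : Smax Γ) := by
      simp only [idMatS, Matrix.of_apply]
      rw [if_neg (fun h => hab (hσinj h))]
    rw [h1, smul_szero]
    rfl
  have hCne : ∀ a : Fin n, C a a ≠ szero := by
    intro a
    rw [hCdiag a]
    exact some_ne_szero _
  unfold detS
  rw [sumS_toList]
  refine Eq.trans (sum_dominant (f := fun π : Equiv.Perm (Fin n) =>
      smul (permSignS π) (prodS (List.finRange n) fun a => C a (π a)))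
      (Finset.mem_univ (1 : Equiv.Perm (Fin n))) ?hdom ?hne) ?hfin
  case hfin =>
    show smul (permSignS 1)
        (prodS (List.finRange n) fun a => C a ((1 : Equiv.Perm (Fin n)) a)) = _
    rw [permSignS_one, sone_smul]
    apply prodS_congr
    intro a _
    show C a ((1 : Equiv.Perm (Fin n)) a) = _
    rw [Equiv.Perm.one_apply, hCdiag a, ← ht a, hg, hc a]
  case hne =>
    show smul (permSignS 1) _ ≠ szero
    rw [permSignS_one, sone_smul]
    apply prodS_ne_szero
    intro a _
    show C a ((1 : Equiv.Perm (Fin n)) a) ≠ szero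
    rw [Equiv.Perm.one_apply]
    exact hCne a
  case hdom =>
    intro π _ hπ1
    have hmodterm : ∀ ρ : Equiv.Perm (Fin n),
        smod (smul (permSignS ρ) (prodS (List.finRange n) fun a => C a (ρ a)))
        = ∑ a, smod (C a (ρ a)) := by
      intro ρ
      rw [smod_smul, smod_permSignS, zero_add, smod_prodS_finRange]
    show smod (smul (permSignS π) _) < smod (smul (permSignS 1) _)
    rw [hmodterm π, hmodterm 1]
    have hm1 : ∑ a, smod (C a ((1 : Equiv.Perm (Fin n)) a))
        = ((∑ a, max g (c a) : Γ) : WithBot Γ) := by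
      rw [coe_finsetSum]
      apply Finset.sum_congr rfl
      intro a _
      rw [Equiv.Perm.one_apply, hCdiag a, smod_some]
    rw [hm1]
    by_cases hz : ∀ a, C a (π a) ≠ szero
    · choose u hu using fun a => Option.ne_none_iff_exists'.mp (hz a)
      have hsmod : ∀ a, smod (C a (π a)) = (((u a).1 : Γ) : WithBot Γ) := by
        intro a
        rw [hu a, smod_some]
      have hsum : ∑ a, smod (C a (π a)) = ((∑ a, (u a).1 : Γ) : WithBot Γ) := by
        rw [coe_finsetSum]
        exact Finset.sum_congr rfl fun a _ => hsmod a
      rw [hsum, WithBot.coe_lt_coe]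
      set S := π.support with hS
      have hSne : S.Nonempty := by
        rw [Finset.nonempty_iff_ne_empty]
        exact fun h => hπ1 (Equiv.Perm.support_eq_empty_iff.mp h)
      have hfix : ∀ a ∈ Finset.univ \ S, (u a).1 = max g (c a) := by
        intro a ha
        rw [Finset.mem_sdiff] at ha
        have hfa : π a = a := by
          by_contra hcon
          exact ha.2 (Equiv.Perm.mem_support.mpr hcon)
        have hthis := hu a
        rw [hfa, hCdiag a] at hthis
        have h2 : u a = (g ⊔ c a, t a) := Option.some_inj.mp hthis.symm
        rw [h2]
      have hmove : ∀ a ∈ S, (u a).1 + (u a).1 < c a + c (π a) := by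
        intro a ha
        have hne2 : π a ≠ a := Equiv.Perm.mem_support.mp ha
        have hσne : σ a ≠ σ (π a) := fun h => hne2 (hσinj h).symm
        have hb := off_bound hdiv hsym hsgn hTPD hσne
        rw [hc a, hc (π a), smod_some, smod_some] at hb
        have hCa : C a (π a) = sneg (A (σ a) (σ (π a))) :=
          hCoff a (π a) fun h => hne2 h.symm
        have hsm : smod (A (σ a) (σ (π a))) = (((u a).1 : Γ) : WithBot Γ) := by
          rw [← smod_sneg, ← hCa, hu a, smod_some]
        rw [hsm, ← WithBot.coe_add, ← WithBot.coe_add, WithBot.coe_lt_coe] at hb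
        exact hb
      have hsum_lt : ∑ a ∈ S, (u a).1 < ∑ a ∈ S, max g (c a) := by
        have h1 : ∑ a ∈ S, ((u a).1 + (u a).1) < ∑ a ∈ S, (c a + c (π a)) :=
          Finset.sum_lt_sum_of_nonempty hSne hmove
        rw [Finset.sum_add_distrib, Finset.sum_add_distrib] at h1
        have h2 : ∑ a ∈ S, c (π a) = ∑ a ∈ S, c a :=
          Equiv.Perm.sum_comp π S c (by
            intro a ha
            simpa [hS, Equiv.Perm.mem_support] using ha)
        rw [h2] at h1
        have h3 : ∑ a ∈ S, (u a).1 < ∑ a ∈ S, c a := by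
          by_contra hcon
          push_neg at hcon
          exact absurd (add_le_add hcon hcon) (not_le.mpr h1)
        exact lt_of_lt_of_le h3
          (Finset.sum_le_sum fun a _ => le_max_right g (c a))
      have hsplitL : ∑ a, (u a).1
          = ∑ a ∈ Finset.univ \ S, (u a).1 + ∑ a ∈ S, (u a).1 :=
        (Finset.sum_sdiff (Finset.subset_univ S)).symm
      have hsplitR : ∑ a, max g (c a)
          = ∑ a ∈ Finset.univ \ S, max g (c a) + ∑ a ∈ S, max g (c a) :=
        (Finset.sum_sdiff (Finset.subset_univ S)).symm
      rw [hsplitL, hsplitR, Finset.sum_congr rfl hfix]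
      exact add_lt_add_right hsum_lt _
    · push_neg at hz
      obtain ⟨a, ha⟩ := hz
      have hsum : ∑ b, smod (C b (π b)) = ⊥ := by
        rw [← Finset.add_sum_erase _ _ (Finset.mem_univ a),
          smod_eq_bot.mpr ha]
        exact WithBot.bot_add _
      rw [hsum]
      exact WithBot.bot_lt_coe _


end Basic

/-- for a TPD matrix with non-increasing diagonal, for
B_k = γ_k⊙I ⊖ A: all diagonal entries of (B_k)^adj are nonzero, those with
index ≠ k are balanced, and the k-th one is balanced iff γ_k is not simple. -/
theorem adjugate_diagonal_of_tpd {Γ : Type} [AddCommGroup Γ] [LinearOrder Γ] [IsOrderedAddMonoid Γ]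
    [Nontrivial Γ] (hdiv : DivisibleGrp Γ) {n : ℕ}
    (A : Matrix (Fin (n+1)) (Fin (n+1)) (Smax Γ))
    (hsym : SymmS A) (hsgn : MatSigned A) (hTPD : TPD A)
    (hsort : DiagSortedS A) (k : Fin (n+1)) :
    (∀ i, adjS (charMatS (A k k) A) i i ≠ szero) ∧
    (∀ i, i ≠ k → IsBal (adjS (charMatS (A k k) A) i i)) ∧
    (IsBal (adjS (charMatS (A k k) A) k k) ↔ ∃ j, j ≠ k ∧ A j j = A k k) := by
  classical
  choose c hc using fun m : Fin (n+1) => diag_pos hTPD m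
  have hadj : ∀ i : Fin (n+1), adjS (charMatS (A k k) A) i i
      = smul (spow (sneg sone) (i.val + i.val))
          (prodS (List.finRange n)
            (fun j => ssub (A k k) (A (i.succAbove j) (i.succAbove j)))) := by
    intro i
    show smul (spow (sneg sone) (i.val + i.val)) (detS _) = _
    rw [det_charMat_sub hdiv hsym hsgn hTPD k i]
  have hfac : ∀ (i : Fin (n+1)) (j : Fin n), ∃ t : SSign,
      ssub (A k k) (A (i.succAbove j) (i.succAbove j))
        = some (max (c k) (c (i.succAbove j)), t) ∧
      (t = SSign.bal ↔ c k = c (i.succAbove j)) := by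
    intro i j
    rw [hc k, hc (i.succAbove j)]
    exact factor_spec _ _
  have hfacne : ∀ (i : Fin (n+1)) (j : Fin n),
      ssub (A k k) (A (i.succAbove j) (i.succAbove j)) ≠ szero := by
    intro i j
    obtain ⟨t, ht, -⟩ := hfac i j
    rw [ht]
    exact some_ne_szero _
  refine ⟨?_, ?_, ?_⟩
  · intro i
    rw [hadj i]
    obtain ⟨s, hsnb, hspow⟩ := spow_sneg_sone (Γ := Γ) (i.val + i.val)
    rw [hspow]
    exact smul_ne_szero (some_ne_szero _)
      (prodS_ne_szero fun j _ => hfacne i j)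
  · intro i hik
    rw [hadj i]
    obtain ⟨s, hsnb, hspow⟩ := spow_sneg_sone (Γ := Γ) (i.val + i.val)
    rw [hspow]
    rw [isBal_smul (some_ne_szero _) (prodS_ne_szero fun j _ => hfacne i j)]
    right
    rw [isBal_prodS fun j _ => hfacne i j]
    obtain ⟨j, hj⟩ := Fin.exists_succAbove_eq (Ne.symm hik)
    refine ⟨j, List.mem_finRange j, ?_⟩
    obtain ⟨t, ht, hb⟩ := hfac i j
    rw [ht]
    show t = SSign.bal
    rw [hb, hj]
  · rw [hadj k]
    obtain ⟨s, hsnb, hspow⟩ := spow_sneg_sone (Γ := Γ) (k.val + k.val)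
    rw [hspow]
    rw [isBal_smul (some_ne_szero _) (prodS_ne_szero fun j _ => hfacne k j)]
    rw [isBal_prodS fun j _ => hfacne k j]
    constructor
    · rintro (hbs | ⟨j, -, hbj⟩)
      · exact absurd (show s = SSign.bal from hbs) hsnb
      · obtain ⟨t, ht, hb⟩ := hfac k j
        rw [ht] at hbj
        have hck : c k = c (k.succAbove j) := hb.mp hbj
        refine ⟨k.succAbove j, Fin.succAbove_ne k j, ?_⟩
        rw [hc (k.succAbove j), hc k, ← hck]
    · rintro ⟨m, hm, hAm⟩
      right
      obtain ⟨j, hj⟩ := Fin.exists_succAbove_eq hm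
      refine ⟨j, List.mem_finRange j, ?_⟩
      obtain ⟨t, ht, hb⟩ := hfac k j
      rw [ht]
      show t = SSign.bal
      rw [hb]
      have h1 : A (k.succAbove j) (k.succAbove j) = A k k := by rw [hj, hAm]
      rw [hc (k.succAbove j), hc k] at h1
      have h2 : c (k.succAbove j) = c k := by
        have h3 := Option.some_inj.mp h1
        exact (Prod.ext_iff.mp h3).1
      exact h2.symm

end TropPaper
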